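/- arXiv:2208.07388 — 2 statements merged into one kernel-verified Lean document; each statement's English description precedes it below -/
import Mathlib

section
/- Let u be a strongly continuous one-parameter unitary group on a Hilbert space H with selfadjoint generator A (so u(t) = exp(itA)). Then the domain of A equals the set of x ∈ H such that limsup_{t→0} ‖(u(t) − 1)x‖/|t| < ∞. -/
open Filter Topology

/-- A one-parameter unitary group on a complex Hilbert space `H`. -/
def IsOneParamUnitaryGroup {H : Type*} [NormedAddCommGroup H] [InnerProductSpace ℂ H]
    [CompleteSpace H] (U : ℝ → (H →L[ℂ] H)) : Prop :=
  U 0 = 1 ∧ (∀ s t : ℝ, U (s + t) = U s * U t) ∧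
    (∀ t : ℝ, U t ∈ unitary (H →L[ℂ] H)) ∧ ∀ x : H, Continuous fun t : ℝ => U t x

/-- `A` is the (selfadjoint, generally unbounded) generator of the one-parameter unitary
group `u`, i.e. `u(t) = exp(itA)` in the sense of Stone's theorem: the domain of `A` is
exactly the set of `x` for which `t ↦ t⁻¹ (u(t)x − x)` converges as `t → 0`, and on the
domain this limit equals `i A x`. -/
def IsGenerator {H : Type*} [NormedAddCommGroup H] [InnerProductSpace ℂ H]
    [CompleteSpace H] (u : ℝ → (H →L[ℂ] H)) (A : H →ₗ.[ℂ] H) : Prop :=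
  (∀ x : H, x ∈ A.domain ↔
      ∃ L : H, Tendsto (fun t : ℝ => (t : ℂ)⁻¹ • (u t x - x)) (𝓝[≠] (0 : ℝ)) (𝓝 L)) ∧
    ∀ (x : H) (hx : x ∈ A.domain),
      Tendsto (fun t : ℝ => (t : ℂ)⁻¹ • (u t x - x)) (𝓝[≠] (0 : ℝ))
        (𝓝 (Complex.I • A ⟨x, hx⟩))

private lemma norm_inv_smul {H : Type*} [NormedAddCommGroup H] [NormedSpace ℂ H]
    (t : ℝ) (v : H) : ‖(t : ℂ)⁻¹ • v‖ = ‖v‖ / |t| := by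
  rw [norm_smul, norm_inv, Complex.norm_real, Real.norm_eq_abs, div_eq_inv_mul]

private lemma tendsto_neg_punctured :
    Tendsto (fun t : ℝ => -t) (𝓝[≠] (0 : ℝ)) (𝓝[≠] (0 : ℝ)) := by
  have h0 : Tendsto (fun t : ℝ => -t) (𝓝 (0 : ℝ)) (𝓝 (0 : ℝ)) := by
    simpa using (continuous_neg.tendsto (0 : ℝ))
  refine tendsto_nhdsWithin_of_tendsto_nhds_of_eventually_within _
    (h0.mono_left nhdsWithin_le_nhds) ?_
  filter_upwards [self_mem_nhdsWithin] with t ht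
  simpa using ht

/-- If `u` is a strongly continuous one-parameter unitary group with
selfadjoint generator `A`, then `dom A` is exactly the set of `x` such that
`limsup_{t→0} ‖(u(t) − 1)x‖/|t| < ∞`. -/
theorem domain_generator_eq {H : Type*} [NormedAddCommGroup H] [InnerProductSpace ℂ H]
    [CompleteSpace H] (u : ℝ → (H →L[ℂ] H)) (hu : IsOneParamUnitaryGroup u)
    (A : H →ₗ.[ℂ] H) (hA : IsSelfAdjoint A) (hgen : IsGenerator u A) :
    (A.domain : Set H) =
      {x : H | IsBoundedUnder (· ≤ ·) (𝓝[≠] (0 : ℝ)) fun t : ℝ => ‖u t x - x‖ / |t|} := by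
  obtain ⟨hu0, hadd, huni, hcont⟩ := hu
  -- star (u t) = u (-t)
  have hstar : ∀ t : ℝ, star (u t) = u (-t) := by
    intro t
    have h1 : u t * u (-t) = 1 := by rw [← hadd]; simpa using hu0
    have h2 : star (u t) * u t = 1 := (Unitary.mem_iff.mp (huni t)).1
    calc star (u t) = star (u t) * (u t * u (-t)) := by rw [h1, mul_one]
      _ = (star (u t) * u t) * u (-t) := by rw [mul_assoc]
      _ = u (-t) := by rw [h2, one_mul]
  ext x
  simp only [SetLike.mem_coe, Set.mem_setOf_eq]
  constructor
  · intro hx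
    have := ((hgen.2 x hx).norm).isBoundedUnder_le
    refine this.mono_le ?_
    filter_upwards with t
    rw [norm_inv_smul]
  · rintro ⟨C, hC⟩
    simp only [eventually_map] at hC
    -- x is in the adjoint domain
    have hxadj : x ∈ A.adjoint.domain := by
      rw [LinearPMap.mem_adjoint_domain_iff]
      refine AddMonoidHomClass.continuous_of_bound ((innerₛₗ ℂ x).comp A.toFun) C (fun y => ?_)
      -- innerₛₗ application: fun y => ⟪x, A y⟫
      have hAy := hgen.2 (y : H) y.2
      have hAy' : A ⟨(y : H), y.2⟩ = A y := by congr
      -- tendsto of inner products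
      have htend : Tendsto (fun t : ℝ => (inner ℂ x ((t : ℂ)⁻¹ • (u t (y : H) - (y : H))) : ℂ))
          (𝓝[≠] (0 : ℝ)) (𝓝 (inner ℂ x (Complex.I • A y))) := by
        rw [← hAy']
        exact (tendsto_const_nhds.inner hAy)
      -- rewrite inner using unitarity
      have hrw : ∀ t : ℝ, (inner ℂ x ((t : ℂ)⁻¹ • (u t (y : H) - (y : H))) : ℂ)
          = inner ℂ ((t : ℂ)⁻¹ • (u (-t) x - x)) (y : H) := by
        intro t
        have hstar' : (inner ℂ x (u t (y : H)) : ℂ) = inner ℂ (u (-t) x) (y : H) := by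
          rw [← hstar t, ContinuousLinearMap.star_eq_adjoint,
            ContinuousLinearMap.adjoint_inner_left]
        rw [inner_smul_right, inner_smul_left, inner_sub_right, inner_sub_left, hstar']
        rw [Complex.conj_inv, Complex.conj_ofReal]
      -- eventual bound on the norm
      have hbound : ∀ᶠ t : ℝ in 𝓝[≠] (0 : ℝ),
          ‖(inner ℂ x ((t : ℂ)⁻¹ • (u t (y : H) - (y : H))) : ℂ)‖ ≤ C * ‖(y : H)‖ := by
        filter_upwards [tendsto_neg_punctured.eventually hC] with t ht
        rw [hrw t]
        calc ‖(inner ℂ ((t : ℂ)⁻¹ • (u (-t) x - x)) (y : H) : ℂ)‖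
            ≤ ‖(t : ℂ)⁻¹ • (u (-t) x - x)‖ * ‖(y : H)‖ := norm_inner_le_norm _ _
          _ ≤ C * ‖(y : H)‖ := by
              apply mul_le_mul_of_nonneg_right _ (norm_nonneg _)
              rw [norm_inv_smul]
              simpa [abs_neg] using ht
      have hlim : ‖(inner ℂ x (Complex.I • A y) : ℂ)‖ ≤ C * ‖(y : H)‖ :=
        le_of_tendsto htend.norm hbound
      have : ‖(inner ℂ x (Complex.I • A y) : ℂ)‖ = ‖(inner ℂ x (A y) : ℂ)‖ := by
        rw [inner_smul_right, norm_mul, Complex.norm_I, one_mul]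
      show ‖(inner ℂ x (A y) : ℂ)‖ ≤ C * ‖(y : H)‖
      rw [← this]
      exact hlim
    have hdom : A.adjoint.domain = A.domain := congrArg LinearPMap.domain hA
    rwa [hdom] at hxadj
end

section
/- Let u be a one-parameter unitary group with generator A, and let x ∈ H satisfy limsup_{t→0} ‖(u(t) − 1)x‖/|t| < ∞. Then for every y in the domain of A, |⟨x, Ay⟩| ≤ (limsup_{t→0} ‖(u(t) − 1)x‖/|t|) · ‖y‖, and consequently x ∈ dom A* = dom A. -/
open Filter Topology

/-- If `x` satisfies `limsup_{t→0} ‖(u(t) − 1)x‖/|t| < ∞`, then for every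
`y ∈ dom A` one has `|⟨x, Ay⟩| ≤ (limsup_{t→0} ‖(u(t) − 1)x‖/|t|)·‖y‖`, and consequently
`x ∈ dom A* = dom A`. -/
theorem mem_domain_of_limsup_lt_top {H : Type*} [NormedAddCommGroup H]
    [InnerProductSpace ℂ H] [CompleteSpace H] (u : ℝ → (H →L[ℂ] H))
    (hu : IsOneParamUnitaryGroup u) (A : H →ₗ.[ℂ] H) (hA : IsSelfAdjoint A)
    (hgen : IsGenerator u A) (x : H)
    (hx : IsBoundedUnder (· ≤ ·) (𝓝[≠] (0 : ℝ)) fun t : ℝ => ‖u t x - x‖ / |t|) :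
    (∀ (y : H) (hy : y ∈ A.domain),
        ‖(inner ℂ x (A ⟨y, hy⟩) : ℂ)‖ ≤
          (limsup (fun t : ℝ => ‖u t x - x‖ / |t|) (𝓝[≠] (0 : ℝ))) * ‖y‖) ∧
      x ∈ A.adjoint.domain ∧ x ∈ A.domain := by
  obtain ⟨hu0, huadd, huuni, -⟩ := hu
  obtain ⟨-, hgen2⟩ := hgen
  set f : ℝ → ℝ := fun t => ‖u t x - x‖ / |t| with hf
  set ℓ : ℝ := limsup f (𝓝[≠] (0 : ℝ)) with hℓ
  -- negation invariance of the filter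
  have hneg : Filter.map (fun t : ℝ => -t) (𝓝[≠] (0 : ℝ)) = 𝓝[≠] (0 : ℝ) := by
    have := (Homeomorph.neg ℝ).isEmbedding.map_nhdsWithin_eq ({0}ᶜ : Set ℝ) 0
    simpa using this
  -- u (-t) is the adjoint of u t
  have hstar : ∀ t : ℝ, u (-t) = ContinuousLinearMap.adjoint (u t) := by
    intro t
    have h1 : u (-t) * u t = 1 := by rw [← huadd, neg_add_cancel, hu0]
    have h2 : star (u t) * u t = 1 := (Unitary.mem_iff.mp (huuni t)).1
    have h3 : u t * u (-t) = 1 := by rw [← huadd, add_neg_cancel, hu0]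
    have h4 : u (-t) = star (u t) := by
      rw [← one_mul (u (-t)), ← h2, mul_assoc, h3, mul_one]
    rw [h4, ContinuousLinearMap.star_eq_adjoint]
  have key : ∀ (y : H) (hy : y ∈ A.domain),
      ‖(inner ℂ x (A ⟨y, hy⟩) : ℂ)‖ ≤ ℓ * ‖y‖ := by
    intro y hy
    rcases eq_or_ne y 0 with rfl | hy0
    · have h0 : (⟨(0 : H), hy⟩ : A.domain) = 0 := rfl
      simp [h0]
    · -- limit of the inner products
      have htend : Tendsto (fun t : ℝ => ‖(inner ℂ x ((t : ℂ)⁻¹ • (u t y - y)) : ℂ)‖)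
          (𝓝[≠] (0 : ℝ)) (𝓝 ‖(inner ℂ x (A ⟨y, hy⟩) : ℂ)‖) := by
        have h1 := (hgen2 y hy)
        have h2 : Tendsto (fun t : ℝ => ‖(inner ℂ x ((t : ℂ)⁻¹ • (u t y - y)) : ℂ)‖)
            (𝓝[≠] (0 : ℝ)) (𝓝 ‖(inner ℂ x (Complex.I • A ⟨y, hy⟩) : ℂ)‖) :=
          ((continuous_norm.comp (continuous_const.inner continuous_id)).tendsto _).comp h1
        have : ‖(inner ℂ x (Complex.I • A ⟨y, hy⟩) : ℂ)‖ = ‖(inner ℂ x (A ⟨y, hy⟩) : ℂ)‖ := by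
          rw [inner_smul_right, norm_mul, Complex.norm_I, one_mul]
        rwa [this] at h2
      -- pointwise bound
      have hbound : ∀ t : ℝ, ‖(inner ℂ x ((t : ℂ)⁻¹ • (u t y - y)) : ℂ)‖ ≤ f (-t) * ‖y‖ := by
        intro t
        have e1 : (inner ℂ x (u t y - y) : ℂ) = inner ℂ (u (-t) x - x) y := by
          rw [inner_sub_right, inner_sub_left, hstar t, ContinuousLinearMap.adjoint_inner_left]
        rw [inner_smul_right, norm_mul]
        calc ‖((t : ℂ)⁻¹)‖ * ‖(inner ℂ x (u t y - y) : ℂ)‖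
            = |t|⁻¹ * ‖(inner ℂ (u (-t) x - x) y : ℂ)‖ := by
              rw [e1, norm_inv, Complex.norm_real, Real.norm_eq_abs]
          _ ≤ |t|⁻¹ * (‖u (-t) x - x‖ * ‖y‖) :=
              mul_le_mul_of_nonneg_left (norm_inner_le_norm _ _) (inv_nonneg.mpr (abs_nonneg t))
          _ = f (-t) * ‖y‖ := by
              show |t|⁻¹ * (‖u (-t) x - x‖ * ‖y‖) = ‖u (-t) x - x‖ / |(-t)| * ‖y‖
              rw [abs_neg]; ring
      -- ε-argument
      refine le_of_forall_pos_le_add fun ε hε => ?_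
      have hδ : 0 < ε / ‖y‖ := div_pos hε (norm_pos_iff.mpr hy0)
      have hev : ∀ᶠ t in 𝓝[≠] (0 : ℝ), f t < ℓ + ε / ‖y‖ :=
        eventually_lt_of_limsup_lt (by linarith [hδ]) hx
      have hevneg : ∀ᶠ t in 𝓝[≠] (0 : ℝ), f (-t) < ℓ + ε / ‖y‖ := by
        rw [← hneg] at hev
        exact hev
      have : ∀ᶠ (t : ℝ) in 𝓝[≠] (0 : ℝ),
          ‖(inner ℂ x ((t : ℂ)⁻¹ • (u t y - y)) : ℂ)‖ ≤ (ℓ + ε / ‖y‖) * ‖y‖ := by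
        filter_upwards [hevneg] with t ht
        exact (hbound t).trans (mul_le_mul_of_nonneg_right ht.le (norm_nonneg y))
      have hle := le_of_tendsto htend this
      have : (ℓ + ε / ‖y‖) * ‖y‖ = ℓ * ‖y‖ + ε := by
        rw [add_mul, div_mul_cancel₀ _ (norm_ne_zero_iff.mpr hy0)]
      linarith [hle, this ▸ hle]
  refine ⟨key, ?_⟩
  have hadj : x ∈ A.adjoint.domain := by
    rw [LinearPMap.mem_adjoint_domain_iff]
    exact AddMonoidHomClass.continuous_of_bound ((innerₛₗ ℂ x).comp A.toFun) ℓ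
      fun y => by simpa using key y.1 y.2
  exact ⟨hadj, by rwa [LinearPMap.isSelfAdjoint_def.mp hA] at hadj⟩
end
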